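/- Let G ∈ 𝔗_a be a digraph without isolated vertices and with h_G ≥ 1. Suppose that for every reflexive H ∈ 𝔗_a with h_H ∈ {h_G, h_G+1} and every ξ ∈ 𝓗(G,H) the following equivalence holds: ξ ∈ 𝓢(G,H) if and only if ξ(P_{i-1})ξ(P_i) ∈ A(H*) for every path P = P_0,…,P_{h_G} of length h_G in G and every 1 ≤ i ≤ h_G. Then every vertex of G lies on a path of length h_G in G, i.e., G ∈ 𝔗_a^{=h_G}. -/

import Mathlib

/-- A finite digraph: a finite nonempty vertex set `V ⊆ ℕ` together with an
arc set `A ⊆ V × V`. -/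
structure Dgraph where
  V : Finset ℕ
  nonempty : V.Nonempty
  A : Finset (ℕ × ℕ)
  A_sub : ∀ p ∈ A, p.1 ∈ V ∧ p.2 ∈ V

namespace Dgraph

/-- The set of proper arcs of `G`, i.e. the arc set of `G*`. -/
def Astar (G : Dgraph) : Finset (ℕ × ℕ) := G.A.filter (fun p => p.1 ≠ p.2)

/-- `G` is reflexive. -/
def IsRefl (G : Dgraph) : Prop := ∀ v ∈ G.V, (v, v) ∈ G.A

/-- `p` is a path in `G` (a nonempty list of pairwise distinct vertices,
consecutive ones joined by arcs).  Its length as a path is `p.length - 1`. -/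
def IsPath (G : Dgraph) (p : List ℕ) : Prop :=
  p ≠ [] ∧ p.Nodup ∧ (∀ v ∈ p, v ∈ G.V) ∧ p.Chain' (fun v w => (v, w) ∈ G.A)

/-- `p` is a path in `G*`. -/
def IsPathStar (G : Dgraph) (p : List ℕ) : Prop :=
  p ≠ [] ∧ p.Nodup ∧ (∀ v ∈ p, v ∈ G.V) ∧ p.Chain' (fun v w => (v, w) ∈ G.A ∧ v ≠ w)

/-- `G*` contains a closed walk. -/
def HasClosedWalkStar (G : Dgraph) : Prop :=
  ∃ p : List ℕ, (∀ v ∈ p, v ∈ G.V) ∧ p.Chain' (fun v w => (v, w) ∈ G.A ∧ v ≠ w) ∧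
    2 ≤ p.length ∧ p.head? = p.getLast?

/-- membership in the class `𝔗ₐ`: `G*` is acyclic. -/
def MemTa (G : Dgraph) : Prop := ¬ G.HasClosedWalkStar

/-- The height of `G`: the maximal length of a path in `G`. -/
noncomputable def height (G : Dgraph) : ℕ :=
  sSup {n | ∃ p, G.IsPath p ∧ p.length = n + 1}

/-- The interval `[v,w]_G`. -/
def interval (G : Dgraph) (v w : ℕ) : Finset ℕ :=
  G.V.filter (fun z => (v, z) ∈ G.A ∧ (z, w) ∈ G.A)

/-- `ι(v,w)_G`, the cardinality of the interval `[v,w]_G`. -/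
def iota (G : Dgraph) (v w : ℕ) : ℕ := (G.interval v w).card

/-- The set `𝓗(G,H)` of homomorphisms from `G` to `H` (represented as total
maps `ℕ → ℕ`, normalized to `0` outside of `V(G)`). -/
def Hom (G H : Dgraph) : Set (ℕ → ℕ) :=
  {f | (∀ v ∈ G.V, f v ∈ H.V) ∧ (∀ p ∈ G.A, (f p.1, f p.2) ∈ H.A) ∧
    ∀ v, v ∉ G.V → f v = 0}

/-- The set `𝓢(G,H)` of strict homomorphisms from `G` to `H`. -/
def SHom (G H : Dgraph) : Set (ℕ → ℕ) :=
  {f ∈ Hom G H | ∀ p ∈ G.Astar, f p.1 ≠ f p.2}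

/-- `μ_ξ(G)`, for a homomorphism `ξ` from `G` into `H`. -/
def mu (G H : Dgraph) (f : ℕ → ℕ) : ℕ :=
  ∑ p ∈ G.Astar, H.iota (f p.1) (f p.2)

/-- `L` is a subgraph of `G`. -/
def Subgraph (L G : Dgraph) : Prop := L.V ⊆ G.V ∧ L.A ⊆ G.A

/-- Restriction of a map to a vertex set (normalized to `0` outside). -/
def restrict (X : Finset ℕ) (f : ℕ → ℕ) : ℕ → ℕ := fun x => if x ∈ X then f x else 0

/-- `𝓜(L,H)`: homomorphisms from `L` to `H` with maximal `μ`. -/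
def MSet (L H : Dgraph) : Set (ℕ → ℕ) :=
  {f ∈ Hom L H | ∀ g ∈ Hom L H, mu L H g ≤ mu L H f}

/-- `𝓜^𝓛(G,H)`. -/
def MLSet (G H : Dgraph) (𝓛 : Set Dgraph) : Set (ℕ → ℕ) :=
  {f ∈ Hom G H | ∀ L ∈ 𝓛, restrict L.V f ∈ MSet L H}

/-- `𝓙^𝓛_{G,H'}(ξ)` for `ξ ∈ 𝓗(G,H)`. -/
def JSet (G H H' : Dgraph) (𝓛 : Set Dgraph) (ξ : ℕ → ℕ) : Set (ℕ → ℕ) :=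
  {ζ ∈ Hom G H' | ∀ L ∈ 𝓛, ∀ p ∈ L.Astar,
    H'.iota (ζ p.1) (ζ p.2) = H.iota (ξ p.1) (ξ p.2)}

/-- The digraph `P_×` of a path `P = P_0, …, P_ℓ`: vertex set `{P_0,…,P_ℓ}`
and arcs `P_{i-1}P_i`. -/
def pathGraph (P : List ℕ) (h : P ≠ []) : Dgraph where
  V := P.toFinset
  nonempty := by
    obtain ⟨a, t, rfl⟩ := List.exists_cons_of_ne_nil h
    exact ⟨a, by simp⟩
  A := (P.zip P.tail).toFinset
  A_sub := by
    intro p hp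
    rw [List.mem_toFinset] at hp
    have h1 := List.of_mem_zip hp
    exact ⟨List.mem_toFinset.mpr h1.1, List.mem_toFinset.mpr (List.mem_of_mem_tail h1.2)⟩

/-- `𝓛(G)`: the set of the digraphs `P_×` for the paths `P` of length `h_G` in `G`. -/
def LSet (G : Dgraph) : Set Dgraph :=
  {D | ∃ (P : List ℕ) (h : P ≠ []), G.IsPath P ∧ P.length = G.height + 1 ∧
    D = pathGraph P h}

/-- The class `𝕽`: reflexive digraphs `R ∈ 𝔗ₐ` with
`𝓜^{𝓛(R)}(R,R) ∩ 𝓢(R,R) ≠ ∅`. -/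
def MemR (R : Dgraph) : Prop :=
  R.MemTa ∧ R.IsRefl ∧ (MLSet R R (LSet R) ∩ SHom R R).Nonempty

/-- `G` is a poset: reflexive, antisymmetric and transitive. -/
def IsPoset (G : Dgraph) : Prop :=
  G.IsRefl ∧ (∀ v w, (v, w) ∈ G.A → (w, v) ∈ G.A → v = w) ∧
    (∀ u v w, (u, v) ∈ G.A → (v, w) ∈ G.A → (u, w) ∈ G.A)

/-- The class `𝔗ₐ^{=n}`: digraphs in `𝔗ₐ` of height `n` in which every vertex
lies on a path of length `n`. -/
def MemTaEq (n : ℕ) (G : Dgraph) : Prop :=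
  G.MemTa ∧ G.height = n ∧ ∀ v ∈ G.V, ∃ p, G.IsPath p ∧ p.length = n + 1 ∧ v ∈ p

/-- A maximal path in `G`: no path in `G` properly contains its vertex set. -/
def MaximalPath (G : Dgraph) (P : List ℕ) : Prop :=
  G.IsPath P ∧ ∀ Q, G.IsPath Q → (∀ v ∈ P, v ∈ Q) → ∀ v ∈ Q, v ∈ P

end Dgraph

open Dgraph

section Aux

theorem List.chain'_singleton {α : Type*} {R : α → α → Prop} (a : α) : List.Chain' R [a] :=
  List.isChain_singleton a

theorem List.chain'_iff_get {α : Type*} {R : α → α → Prop} {l : List α} :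
    List.Chain' R l ↔ ∀ (i : ℕ) (h : i < l.length - 1),
      R (l.get ⟨i, by omega⟩) (l.get ⟨i + 1, by omega⟩) := by
  unfold List.Chain'
  rw [List.isChain_iff_getElem]
  constructor <;> intro h i hi <;> simpa using h i (by omega)

theorem List.chain'_cons {α : Type*} {R : α → α → Prop} {x y : α} {l : List α} :
    List.Chain' R (x :: y :: l) ↔ R x y ∧ List.Chain' R (y :: l) :=
  List.isChain_cons_cons

theorem List.chain'_append {α : Type*} {R : α → α → Prop} {l₁ l₂ : List α} :
    List.Chain' R (l₁ ++ l₂) ↔ List.Chain' R l₁ ∧ List.Chain' R l₂ ∧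
      ∀ x ∈ l₁.getLast?, ∀ y ∈ l₂.head?, R x y :=
  List.isChain_append

theorem List.chain'_range_succ (r : ℕ → ℕ → Prop) (n : ℕ) :
    List.Chain' r (List.range n.succ) ↔ ∀ m < n, r m m.succ :=
  List.isChain_range_succ r n

lemma path_len_le (G : Dgraph) {p : List ℕ} (hp : G.IsPath p) : p.length ≤ G.V.card := by
  obtain ⟨-, hnd, hmem, -⟩ := hp
  calc p.length = p.toFinset.card := (List.toFinset_card_of_nodup hnd).symm
  _ ≤ G.V.card := Finset.card_le_card (fun v hv => hmem v (List.mem_toFinset.mp hv))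

lemma isPath_singleton (G : Dgraph) {v : ℕ} (hv : v ∈ G.V) : G.IsPath [v] :=
  ⟨List.cons_ne_nil _ _, List.nodup_singleton _, by simpa using hv, List.chain'_singleton _⟩

lemma height_bdd (G : Dgraph) : BddAbove {n | ∃ p, G.IsPath p ∧ p.length = n + 1} := by
  refine ⟨G.V.card, fun n hn => ?_⟩
  obtain ⟨p, hp, hl⟩ := hn
  have := path_len_le G hp
  omega

lemma le_height (G : Dgraph) {n : ℕ} (hn : ∃ p, G.IsPath p ∧ p.length = n + 1) :
    n ≤ G.height := le_csSup (height_bdd G) hn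

/-- longest path ending at `u`. -/
noncomputable def lam (G : Dgraph) (u : ℕ) : ℕ :=
  sSup {n | ∃ p, G.IsPath p ∧ p.getLast? = some u ∧ p.length = n + 1}

lemma lam_bdd (G : Dgraph) (u : ℕ) :
    BddAbove {n | ∃ p, G.IsPath p ∧ p.getLast? = some u ∧ p.length = n + 1} := by
  refine ⟨G.V.card, fun n hn => ?_⟩
  obtain ⟨p, hp, -, hl⟩ := hn
  have := path_len_le G hp
  omega

lemma lam_ne (G : Dgraph) {u : ℕ} (hu : u ∈ G.V) :
    {n | ∃ p, G.IsPath p ∧ p.getLast? = some u ∧ p.length = n + 1}.Nonempty :=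
  ⟨0, [u], isPath_singleton G hu, rfl, rfl⟩

lemma exists_lam_path (G : Dgraph) {u : ℕ} (hu : u ∈ G.V) :
    ∃ p, G.IsPath p ∧ p.getLast? = some u ∧ p.length = lam G u + 1 :=
  Nat.sSup_mem (lam_ne G hu) (lam_bdd G u)

lemma le_lam (G : Dgraph) {u n : ℕ}
    (hn : ∃ p, G.IsPath p ∧ p.getLast? = some u ∧ p.length = n + 1) :
    n ≤ lam G u := le_csSup (lam_bdd G u) hn

lemma lam_le_height (G : Dgraph) {u : ℕ} (hu : u ∈ G.V) : lam G u ≤ G.height := by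
  obtain ⟨p, hp, -, hl⟩ := exists_lam_path G hu
  exact le_height G ⟨p, hp, hl⟩

lemma chain'_proper {p : List ℕ} {A : Finset (ℕ × ℕ)} (hnd : p.Nodup)
    (hc : p.Chain' (fun v w => (v, w) ∈ A)) :
    p.Chain' (fun v w => (v, w) ∈ A ∧ v ≠ w) := by
  rw [List.chain'_iff_get] at hc ⊢
  intro i hi
  refine ⟨hc i hi, fun h => ?_⟩
  have := (hnd.get_inj_iff).mp h
  simp [Fin.ext_iff] at this

lemma two_cycle_absurd (G : Dgraph) (hG : G.MemTa) {u v : ℕ}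
    (h1 : (u, v) ∈ G.A) (h2 : (v, u) ∈ G.A) (hne : u ≠ v) : False := by
  refine hG ⟨[u, v, u], ?_, ?_, by simp, by simp⟩
  · intro z hz
    have hu := (G.A_sub _ h1).1
    have hv := (G.A_sub _ h1).2
    simp at hz
    rcases hz with rfl | rfl | rfl <;> assumption
  · exact List.chain'_cons.mpr ⟨⟨h1, hne⟩, List.chain'_cons.mpr ⟨⟨h2, hne.symm⟩,
      List.chain'_singleton _⟩⟩

lemma lam_succ_le (G : Dgraph) (hG : G.MemTa) {u v : ℕ} (huv : (u, v) ∈ G.A)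
    (hne : u ≠ v) : lam G u + 1 ≤ lam G v := by
  have hu : u ∈ G.V := (G.A_sub _ huv).1
  have hv : v ∈ G.V := (G.A_sub _ huv).2
  obtain ⟨p, hp, hlast, hlen⟩ := exists_lam_path G hu
  obtain ⟨hne', hnd, hmem, hch⟩ := hp
  by_cases hvm : v ∈ p
  · exfalso
    obtain ⟨s, t, rfl⟩ := List.append_of_mem hvm
    have hproper : (s ++ v :: t).Chain' (fun a b => (a, b) ∈ G.A ∧ a ≠ b) :=
      chain'_proper hnd hch
    have hq : (v :: t).Chain' (fun a b => (a, b) ∈ G.A ∧ a ≠ b) :=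
      ((List.chain'_append).mp hproper).2.1
    have hlastq : (v :: t).getLast? = some u := by
      rw [List.getLast?_append] at hlast
      rw [List.getLast?_eq_getLast (List.cons_ne_nil _ _)] at hlast ⊢
      simpa using hlast
    refine hG ⟨(v :: t) ++ [v], ?_, ?_, ?_, ?_⟩
    · intro z hz
      simp only [List.mem_append, List.mem_singleton] at hz
      rcases hz with hz | rfl
      · exact hmem z (by simp [hz])
      · exact hv
    · rw [List.chain'_append]
      refine ⟨hq, List.chain'_singleton _, ?_⟩
      intro a ha b hb
      rw [hlastq] at ha
      simp at ha hb
      subst ha; subst hb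
      exact ⟨huv, hne⟩
    · simp
    · have hgl : ((v :: t) ++ [v]).getLast? = some v := List.getLast?_concat
      rw [hgl]; rfl
  · have hpath : G.IsPath (p ++ [v]) := by
      refine ⟨by simp, ?_, ?_, ?_⟩
      · rw [List.nodup_append]
        exact ⟨hnd, List.nodup_singleton _, by intro a ha b hb; simp at hb; subst hb; exact fun h => hvm (h ▸ ha)⟩
      · intro z hz
        simp only [List.mem_append, List.mem_singleton] at hz
        rcases hz with hz | rfl
        · exact hmem z hz
        · exact hv
      · rw [List.chain'_append]
        refine ⟨hch, List.chain'_singleton _, ?_⟩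
        intro a ha b hb
        rw [hlast] at ha
        simp at ha hb
        subst ha; subst hb; exact huv
    refine le_lam G ⟨p ++ [v], hpath, List.getLast?_concat, by simp [hlen]⟩

/-- The reflexive chain on `{0, …, n}`. -/
def chainD (n : ℕ) : Dgraph where
  V := Finset.range (n + 1)
  nonempty := ⟨0, by simp⟩
  A := (Finset.range (n + 1) ×ˢ Finset.range (n + 1)).filter (fun p => p.1 ≤ p.2)
  A_sub := by
    intro p hp
    simp only [Finset.mem_filter, Finset.mem_product] at hp
    exact hp.1

lemma chainD_mem_A {n a b : ℕ} :
    (a, b) ∈ (chainD n).A ↔ a < n + 1 ∧ b < n + 1 ∧ a ≤ b := by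
  simp [chainD, Finset.mem_filter, Finset.mem_product, and_assoc]

lemma chainD_refl (n : ℕ) : (chainD n).IsRefl := by
  intro v hv
  simp only [chainD, Finset.mem_range] at hv
  exact chainD_mem_A.mpr ⟨hv, hv, le_rfl⟩

lemma chain_lt_getLast : ∀ (l : List ℕ) (a : ℕ), List.Chain (· < ·) a l →
    ∀ b ∈ l.getLast?, a < b := by
  intro l
  induction l with
  | nil => simp
  | cons c t ih =>
    intro a hc b hb
    rcases List.chain_cons.mp hc with ⟨hac, ht⟩
    cases t with
    | nil => simp at hb; omega
    | cons d t' =>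
      rw [List.getLast?_cons_cons] at hb
      exact lt_trans hac (ih c ht b hb)

lemma chainD_memTa (n : ℕ) : (chainD n).MemTa := by
  rintro ⟨p, hmem, hch, hlen, hcl⟩
  have hch' : p.Chain' (· < ·) := by
    refine hch.imp ?_
    rintro a b ⟨hab, hne⟩
    have := chainD_mem_A.mp hab
    omega
  match p, hlen with
  | a :: c :: t, _ =>
    have h1 : List.Chain (· < ·) a (c :: t) := hch'
    have h2 : (a :: c :: t).getLast? = (c :: t).getLast? := List.getLast?_cons_cons ..
    have h3 : (a :: c :: t).head? = some a := rfl
    rw [h3, h2] at hcl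
    have := chain_lt_getLast (c :: t) a h1 a hcl.symm
    omega

lemma chainD_height (n : ℕ) : (chainD n).height = n := by
  apply le_antisymm
  · refine csSup_le ⟨0, [0], isPath_singleton _ (by simp [chainD]), rfl⟩ ?_
    rintro k ⟨p, hp, hl⟩
    have := path_len_le (chainD n) hp
    simp [chainD] at this
    omega
  · refine le_height _ ⟨List.range (n + 1), ⟨?_, List.nodup_range, ?_, ?_⟩, by simp⟩
    · simp [List.range_eq_nil]
    · intro v hv
      simpa [chainD] using List.mem_range.mp hv
    · rw [show n + 1 = Nat.succ n from rfl, List.chain'_range_succ]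
      intro m hm
      exact chainD_mem_A.mpr ⟨by omega, by omega, by omega⟩

end Aux

lemma core_contra (G : Dgraph) (hG : G.MemTa)
    (hyp : ∀ H : Dgraph, H.MemTa → H.IsRefl →
      (H.height = G.height ∨ H.height = G.height + 1) →
      ∀ ξ ∈ Hom G H,
        (ξ ∈ SHom G H ↔
          ∀ P : List ℕ, G.IsPath P → P.length = G.height + 1 →
            ∀ i, i + 1 < P.length →
              (ξ (P.getD i 0), ξ (P.getD (i + 1) 0)) ∈ H.Astar))
    {x y m : ℕ} (hxy : x ≠ y) (hA : (x, y) ∈ G.A)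
    (hxm : lam G x ≤ m) (hym : m + 1 ≤ lam G y)
    (hin : ∀ a ∈ G.V, a ≠ x → a ≠ y → ((a, x) ∈ G.A ∨ (a, y) ∈ G.A) → lam G a ≤ m)
    (hout : ∀ b ∈ G.V, b ≠ x → b ≠ y → ((x, b) ∈ G.A ∨ (y, b) ∈ G.A) → m + 1 ≤ lam G b)
    (hbad : ∀ P, G.IsPath P → P.length = G.height + 1 → ¬(x ∈ P ∧ y ∈ P)) :
    False := by
  have hxV : x ∈ G.V := (G.A_sub _ hA).1
  have hyV : y ∈ G.V := (G.A_sub _ hA).2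
  set h := G.height with hh_def
  have hmh : m + 1 ≤ h := le_trans hym (lam_le_height G hyV)
  set H := chainD (h + 1) with hH_def
  set ψ : ℕ → ℕ := fun u =>
    if u = x ∨ u = y then m + 1 else if lam G u ≤ m then lam G u else lam G u + 1
    with hψ_def
  set ξ : ℕ → ℕ := fun u => if u ∈ G.V then ψ u else 0 with hξ_def
  have hψ_range : ∀ u ∈ G.V, ψ u < h + 2 := by
    intro u hu
    have := lam_le_height G hu
    simp only [hψ_def]
    split
    · omega
    · split <;> omega
  -- key step lemma
  have step : ∀ u v : ℕ, (u, v) ∈ G.A → u ≠ v →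
      ψ u ≤ ψ v ∧ (ψ u = ψ v → u = x ∧ v = y) := by
    intro u v huv hne
    have huV : u ∈ G.V := (G.A_sub _ huv).1
    have hvV : v ∈ G.V := (G.A_sub _ huv).2
    have hlt : lam G u + 1 ≤ lam G v := lam_succ_le G hG huv hne
    by_cases hu : u = x ∨ u = y
    · by_cases hv : v = x ∨ v = y
      · -- both in {x,y}
        rcases hu with rfl | rfl <;> rcases hv with rfl | rfl
        · exact absurd rfl hne
        · exact ⟨by simp [hψ_def], fun _ => ⟨rfl, rfl⟩⟩
        · exact absurd hxy (by exact fun h' => two_cycle_absurd G hG huv hA hne)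
        · exact absurd rfl hne
      · -- u ∈ {x,y}, v ∉
        push_neg at hv
        have hb : m + 1 ≤ lam G v := by
          refine hout v hvV hv.1 hv.2 ?_
          rcases hu with rfl | rfl
          · exact Or.inl huv
          · exact Or.inr huv
        have h1 : ψ u = m + 1 := by simp [hψ_def, hu]
        have h2 : ψ v = lam G v + 1 := by
          simp only [hψ_def]
          rw [if_neg (by push_neg; exact hv), if_neg (by omega)]
        constructor
        · omega
        · intro h'; omega
    · by_cases hv : v = x ∨ v = y
      · -- v ∈ {x,y}, u ∉
        push_neg at hu
        have ha : lam G u ≤ m := by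
          refine hin u huV hu.1 hu.2 ?_
          rcases hv with rfl | rfl
          · exact Or.inl huv
          · exact Or.inr huv
        have h1 : ψ u = lam G u := by
          simp only [hψ_def]
          rw [if_neg (by push_neg; exact hu), if_pos ha]
        have h2 : ψ v = m + 1 := by simp [hψ_def, hv]
        exact ⟨by omega, fun h' => by omega⟩
      · -- neither
        push_neg at hu hv
        have h1 : ψ u = if lam G u ≤ m then lam G u else lam G u + 1 := by
          simp only [hψ_def]; rw [if_neg (by push_neg; exact hu)]
        have h2 : ψ v = if lam G v ≤ m then lam G v else lam G v + 1 := by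
          simp only [hψ_def]; rw [if_neg (by push_neg; exact hv)]
        constructor
        · rw [h1, h2]; split <;> split <;> omega
        · rw [h1, h2]; split <;> split <;> (intro h'; omega)
  have hHA : ∀ a b : ℕ, a < h + 2 → b < h + 2 → a ≤ b → (a, b) ∈ H.A := by
    intro a b ha hb hab
    exact chainD_mem_A.mpr ⟨ha, hb, hab⟩
  have hhom : ξ ∈ Hom G H := by
    refine ⟨?_, ?_, ?_⟩
    · intro v hv
      simp only [hξ_def, if_pos hv, hH_def, chainD, Finset.mem_range]
      exact hψ_range v hv
    · rintro ⟨u, v⟩ huv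
      have huV : u ∈ G.V := (G.A_sub _ huv).1
      have hvV : v ∈ G.V := (G.A_sub _ huv).2
      simp only [hξ_def, if_pos huV, if_pos hvV]
      by_cases hne : u = v
      · subst hne
        exact hHA _ _ (hψ_range u huV) (hψ_range u huV) le_rfl
      · exact hHA _ _ (hψ_range u huV) (hψ_range v hvV) ((step u v huv hne).1)
    · intro v hv
      simp [hξ_def, if_neg hv]
  have hiff := hyp H (chainD_memTa _) (chainD_refl _)
    (Or.inr (by rw [hH_def, chainD_height])) ξ hhom
  have hstrict : ξ ∈ SHom G H := by
    rw [hiff]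
    intro P hP hlen i hi
    have hi' : i < P.length := by omega
    have ha : P.getD i 0 = P.get ⟨i, hi'⟩ := List.getD_eq_get P 0 ⟨i, hi'⟩
    have hb : P.getD (i + 1) 0 = P.get ⟨i + 1, hi⟩ := List.getD_eq_get P 0 ⟨i + 1, hi⟩
    set a := P.get ⟨i, hi'⟩ with ha_def
    set b := P.get ⟨i + 1, hi⟩ with hb_def
    have haP : a ∈ P := List.get_mem P ⟨i, hi'⟩
    have hbP : b ∈ P := List.get_mem P ⟨i + 1, hi⟩
    have haV : a ∈ G.V := hP.2.2.1 a haP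
    have hbV : b ∈ G.V := hP.2.2.1 b hbP
    have hab : (a, b) ∈ G.A := by
      have := List.chain'_iff_get.mp hP.2.2.2 i (by omega)
      exact this
    have hne : a ≠ b := by
      intro h'
      have := (hP.2.1.get_inj_iff).mp h'
      simp [Fin.ext_iff] at this
    obtain ⟨hle, heq⟩ := step a b hab hne
    have hne2 : ψ a ≠ ψ b := by
      intro h'
      obtain ⟨rfl, rfl⟩ := heq h'
      exact hbad P hP hlen ⟨haP, hbP⟩
    rw [ha, hb]
    simp only [Dgraph.Astar, Finset.mem_filter]
    refine ⟨?_, ?_⟩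
    · simp only [hξ_def, if_pos haV, if_pos hbV]
      exact hHA _ _ (hψ_range a haV) (hψ_range b hbV) hle
    · simp only [hξ_def, if_pos haV, if_pos hbV]
      exact hne2
  have hmemAstar : (x, y) ∈ G.Astar := by
    simp only [Dgraph.Astar, Finset.mem_filter]
    exact ⟨hA, hxy⟩
  have := hstrict.2 (x, y) hmemAstar
  apply this
  simp only [hξ_def, if_pos hxV, if_pos hyV, hψ_def]
  simp

theorem stmt_9 (G : Dgraph) (hG : G.MemTa)
    (hNoIso : ∀ v ∈ G.V, ∃ w, w ≠ v ∧ ((v, w) ∈ G.A ∨ (w, v) ∈ G.A))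
    (hh : 1 ≤ G.height)
    (hyp : ∀ H : Dgraph, H.MemTa → H.IsRefl →
      (H.height = G.height ∨ H.height = G.height + 1) →
      ∀ ξ ∈ Hom G H,
        (ξ ∈ SHom G H ↔
          ∀ P : List ℕ, G.IsPath P → P.length = G.height + 1 →
            ∀ i, i + 1 < P.length →
              (ξ (P.getD i 0), ξ (P.getD (i + 1) 0)) ∈ H.Astar)) :
    MemTaEq G.height G := by
  refine ⟨hG, rfl, ?_⟩
  intro v hv
  by_contra hnp
  obtain ⟨w, hwne, hw⟩ := hNoIso v hv
  have hbad : ∀ (x y : ℕ), (v = x ∨ v = y) → ∀ P, G.IsPath P →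
      P.length = G.height + 1 → ¬(x ∈ P ∧ y ∈ P) := by
    rintro x y hvxy P hP hlen ⟨hxP, hyP⟩
    refine hnp ⟨P, hP, hlen, ?_⟩
    rcases hvxy with rfl | rfl <;> assumption
  rcases hw with hvw | hwv
  · -- out-neighbour: choose one with minimal lam
    have hwV : w ∈ G.V := (G.A_sub _ hvw).2
    set N := G.V.filter (fun b => (v, b) ∈ G.A ∧ b ≠ v) with hN_def
    have hNne : N.Nonempty := ⟨w, by simp [hN_def, hwV, hvw, hwne]⟩
    obtain ⟨y, hyN, hymin⟩ := Finset.exists_min_image N (lam G) hNne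
    simp only [hN_def, Finset.mem_filter] at hyN
    obtain ⟨hyV, hvy, hyne⟩ := hyN
    have hlt : lam G v + 1 ≤ lam G y := lam_succ_le G hG hvy (Ne.symm hyne)
    refine core_contra G hG hyp (x := v) (y := y) (m := lam G y - 1)
      (Ne.symm hyne) hvy (by omega) (by omega) ?_ ?_ (hbad v y (Or.inl rfl))
    · intro a haV hax hay harc
      rcases harc with hav | hay2
      · have := lam_succ_le G hG hav hax
        omega
      · have := lam_succ_le G hG hay2 hay
        omega
    · intro b hbV hbx hby harc
      rcases harc with hvb | hyb
      · have hbN : b ∈ N := by simp [hN_def, hbV, hvb, hbx]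
        have := hymin b hbN
        omega
      · have := lam_succ_le G hG hyb (fun h' => hby h'.symm)
        omega
  · -- in-neighbour: choose one with maximal lam
    have hwV : w ∈ G.V := (G.A_sub _ hwv).1
    set N := G.V.filter (fun a => (a, v) ∈ G.A ∧ a ≠ v) with hN_def
    have hNne : N.Nonempty := ⟨w, by simp [hN_def, hwV, hwv, hwne]⟩
    obtain ⟨x, hxN, hxmax⟩ := Finset.exists_max_image N (lam G) hNne
    simp only [hN_def, Finset.mem_filter] at hxN
    obtain ⟨hxV, hxv, hxne⟩ := hxN
    have hlt : lam G x + 1 ≤ lam G v := lam_succ_le G hG hxv hxne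
    refine core_contra G hG hyp (x := x) (y := v) (m := lam G x)
      hxne hxv le_rfl hlt ?_ ?_ (hbad x v (Or.inr rfl))
    · intro a haV hax hav harc
      rcases harc with hax2 | hav2
      · have := lam_succ_le G hG hax2 hax
        omega
      · have haN : a ∈ N := by simp [hN_def, haV, hav2, hav]
        have := hxmax a haN
        omega
    · intro b hbV hbx hbv harc
      rcases harc with hxb | hvb
      · have := lam_succ_le G hG hxb (fun h' => hbx h'.symm)
        omega
      · have := lam_succ_le G hG hvb (fun h' => hbv h'.symm)
        omega
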